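/- arXiv:2003.03965 — 7 statements merged into one kernel-verified Lean document; each statement's English description precedes it below -/
import Mathlib

section
/- Let f be a monic polynomial of degree m over ℂ with distinct roots α_1,...,α_m, A its companion matrix, M = Σ_{n=0}^{m-1} x_n A^n with x_i ∈ ℂ, and γ_j = Σ_{i=0}^{m-1} x_i α_j^i. Suppose for a fixed k we have |γ_k| > |γ_j| for all j ≠ k and γ_k ≠ 0. Then for any indices i,j,p,q with V^{-1}_{p,k} V_{k,q} ≠ 0, the ratio (M^n)_{i,j} / (M^n)_{p,q} converges as n → ∞ to (V^{-1}_{i,k} V_{k,j}) / (V^{-1}_{p,k} V_{k,q}). -/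
open Matrix BigOperators Filter

/-- Convergence of ratios of entries of powers of the regular representation matrix,
under the dominance condition `|γₖ| > |γⱼ|` for `j ≠ k`. -/
theorem regular_rep_ratio_tendsto (m : ℕ) (hm : 1 ≤ m)
    (u : Fin m → ℂ) (α : Fin m → ℂ) (hdist : Function.Injective α)
    (hroot : ∀ k : Fin m, α k ^ m = ∑ s : Fin m, u s.rev * α k ^ (s : ℕ))
    (A : Matrix (Fin m) (Fin m) ℂ)
    (hA : ∀ i j : Fin m, A i j =
      if (j : ℕ) = m - 1 then u i.rev
      else if (i : ℕ) = (j : ℕ) + 1 then 1 else 0)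
    (x : Fin m → ℂ) (M : Matrix (Fin m) (Fin m) ℂ)
    (hM : M = ∑ n : Fin m, x n • A ^ (n : ℕ))
    (γ : Fin m → ℂ) (hγ : ∀ k, γ k = ∑ s : Fin m, x s * α k ^ (s : ℕ))
    (k : Fin m) (hγk : γ k ≠ 0)
    (hdom : ∀ j : Fin m, j ≠ k → ‖γ j‖ < ‖γ k‖)
    (i j p q : Fin m)
    (hden : (Matrix.vandermonde α)⁻¹ p k * Matrix.vandermonde α k q ≠ 0) :
    Tendsto (fun n : ℕ => (M ^ n) i j / (M ^ n) p q) atTop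
      (nhds ((Matrix.vandermonde α)⁻¹ i k * Matrix.vandermonde α k j /
        ((Matrix.vandermonde α)⁻¹ p k * Matrix.vandermonde α k q))) := by
  set V : Matrix (Fin m) (Fin m) ℂ := Matrix.vandermonde α with hVdef
  have hdet : IsUnit V.det := by
    rw [isUnit_iff_ne_zero, hVdef, Matrix.det_vandermonde]
    refine Finset.prod_ne_zero_iff.2 fun r _ => Finset.prod_ne_zero_iff.2 fun s hs => ?_
    exact sub_ne_zero.2 fun h => (Finset.mem_Ioi.1 hs).ne' (hdist h)
  have hViV : V⁻¹ * V = 1 := Matrix.nonsing_inv_mul V hdet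
  have hVVi : V * V⁻¹ = 1 := Matrix.mul_nonsing_inv V hdet
  -- V * A = diagonal α * V
  have hVA : V * A = Matrix.diagonal α * V := by
    ext r c
    rw [Matrix.mul_apply, Matrix.diagonal_mul]
    by_cases hc : (c : ℕ) = m - 1
    · have : ∀ s : Fin m, V r s * A s c = u s.rev * α r ^ (s : ℕ) := by
        intro s; rw [hA, if_pos hc]; simp [hVdef, Matrix.vandermonde, mul_comm]
      rw [Finset.sum_congr rfl fun s _ => this s, ← hroot r]
      have : V r c = α r ^ (m - 1) := by simp [hVdef, Matrix.vandermonde, hc]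
      rw [this, ← pow_succ', Nat.sub_add_cancel hm]
    · have hlt : (c : ℕ) + 1 < m := by
        have := c.isLt; omega
      have : ∀ s : Fin m, V r s * A s c =
          if s = ⟨(c : ℕ) + 1, hlt⟩ then α r ^ ((c : ℕ) + 1) else 0 := by
        intro s
        rw [hA, if_neg hc]
        by_cases hs : s = ⟨(c : ℕ) + 1, hlt⟩
        · subst hs; simp [hVdef, Matrix.vandermonde]
        · rw [if_neg hs, if_neg, mul_zero]
          exact fun h => hs (Fin.ext h)
      rw [Finset.sum_congr rfl fun s _ => this s, Finset.sum_ite_eq' _ _ _]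
      simp [hVdef, Matrix.vandermonde, pow_succ, mul_comm]
  -- V * M = diagonal γ * V
  have hVAn : ∀ n : ℕ, V * A ^ n = Matrix.diagonal (fun t => α t ^ n) * V := by
    intro n
    induction n with
    | zero => simp
    | succ n ih =>
        rw [pow_succ, ← Matrix.mul_assoc, ih, Matrix.mul_assoc, hVA, ← Matrix.mul_assoc,
          Matrix.diagonal_mul_diagonal]
        congr 1
  have hVM : V * M = Matrix.diagonal γ * V := by
    rw [hM, Matrix.mul_sum]
    have : ∀ n : Fin m, V * (x n • A ^ (n : ℕ)) =
        Matrix.diagonal (fun t => x n * α t ^ (n : ℕ)) * V := by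
      intro n
      rw [Matrix.mul_smul, hVAn, ← Matrix.smul_mul]
      congr 1
      ext a b
      rw [Matrix.smul_apply, Matrix.diagonal_apply, Matrix.diagonal_apply]
      split <;> simp
    rw [Finset.sum_congr rfl fun n _ => this n, ← Finset.sum_mul]
    congr 1
    ext a b
    rw [Matrix.sum_apply]
    by_cases h : a = b <;> simp [h, Matrix.diagonal_apply, hγ]
  -- Mⁿ entries
  have hMn : ∀ n : ℕ, V * M ^ n = Matrix.diagonal (fun t => γ t ^ n) * V := by
    intro n
    induction n with
    | zero => simp
    | succ n ih =>
        rw [pow_succ, ← Matrix.mul_assoc, ih, Matrix.mul_assoc, hVM, ← Matrix.mul_assoc,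
          Matrix.diagonal_mul_diagonal]
        congr 1
  have hentry : ∀ (n : ℕ) (a b : Fin m),
      (M ^ n) a b = ∑ t : Fin m, V⁻¹ a t * γ t ^ n * V t b := by
    intro n a b
    have : M ^ n = V⁻¹ * (Matrix.diagonal (fun t => γ t ^ n) * V) := by
      rw [← hMn, ← Matrix.mul_assoc, hViV, Matrix.one_mul]
    rw [this, ← Matrix.mul_assoc, Matrix.mul_apply]
    refine Finset.sum_congr rfl fun t _ => ?_
    rw [Matrix.mul_diagonal]
  -- key limit
  have key : ∀ a b : Fin m,
      Tendsto (fun n : ℕ => (M ^ n) a b / γ k ^ n) atTop (nhds (V⁻¹ a k * V k b)) := by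
    intro a b
    have heq : ∀ n : ℕ, (M ^ n) a b / γ k ^ n
        = ∑ t : Fin m, V⁻¹ a t * (γ t / γ k) ^ n * V t b := by
      intro n
      rw [hentry, Finset.sum_div]
      refine Finset.sum_congr rfl fun t _ => ?_
      rw [div_pow]
      field_simp
    simp only [heq]
    have hlim : (V⁻¹ a k * V k b)
        = ∑ t : Fin m, V⁻¹ a t * (if t = k then (1:ℂ) else 0) * V t b := by
      rw [Finset.sum_eq_single k]
      · simp
      · intro t _ ht; simp [ht]
      · simp
    rw [hlim]
    refine tendsto_finset_sum _ fun t _ => ?_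
    by_cases ht : t = k
    · subst ht
      simp [div_self hγk]
    · have h1 : ‖γ t / γ k‖ < 1 := by
        rw [norm_div, div_lt_one (norm_pos_iff.mpr hγk)]
        exact hdom t ht
      have h0 := tendsto_pow_atTop_nhds_zero_of_norm_lt_one h1
      simpa [ht] using (h0.const_mul (V⁻¹ a t)).mul_const (V t b)
  have hratio : ∀ n : ℕ, (M ^ n) i j / (M ^ n) p q
      = ((M ^ n) i j / γ k ^ n) / ((M ^ n) p q / γ k ^ n) := by
    intro n
    rw [div_div_div_comm, div_self (pow_ne_zero n hγk), div_one]
  simp only [hratio]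
  exact (key i j).div (key p q) hden
end

section
/- Under the dominance condition |γ_k| > |γ_j| for all j ≠ k, writing A_s = V^{-1}_{i,k_s} V_{k_s,j} and B_s = V^{-1}_{p,k_s} V_{k_s,q} (with the notation of the limit theorem), if B_k ≠ 0 then there exists a constant C such that |(M^n)_{i,j}/(M^n)_{p,q} - A_k/B_k| ≤ C · (max_{j≠k} |γ_j|/|γ_k|)^n for all sufficiently large n. -/
open Matrix BigOperators Filter

/-- Rate of convergence: under the dominance condition, the error of the ratio of
entries of `Mⁿ` is `O((max_{j≠k} |γⱼ|/|γₖ|)ⁿ)`. -/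
theorem regular_rep_ratio_rate (m : ℕ) (hm : 1 ≤ m)
    (u : Fin m → ℂ) (α : Fin m → ℂ) (hdist : Function.Injective α)
    (hroot : ∀ k : Fin m, α k ^ m = ∑ s : Fin m, u s.rev * α k ^ (s : ℕ))
    (A : Matrix (Fin m) (Fin m) ℂ)
    (hA : ∀ i j : Fin m, A i j =
      if (j : ℕ) = m - 1 then u i.rev
      else if (i : ℕ) = (j : ℕ) + 1 then 1 else 0)
    (x : Fin m → ℂ) (M : Matrix (Fin m) (Fin m) ℂ)
    (hM : M = ∑ n : Fin m, x n • A ^ (n : ℕ))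
    (γ : Fin m → ℂ) (hγ : ∀ k, γ k = ∑ s : Fin m, x s * α k ^ (s : ℕ))
    (k : Fin m) (hγk : γ k ≠ 0)
    (hdom : ∀ j : Fin m, j ≠ k → ‖γ j‖ < ‖γ k‖)
    (hne : (Finset.univ.erase k).Nonempty)
    (i j p q : Fin m)
    (hden : (Matrix.vandermonde α)⁻¹ p k * Matrix.vandermonde α k q ≠ 0) :
    ∃ C : ℝ, ∀ᶠ n : ℕ in atTop,
      ‖(M ^ n) i j / (M ^ n) p q -
          (Matrix.vandermonde α)⁻¹ i k * Matrix.vandermonde α k j /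
            ((Matrix.vandermonde α)⁻¹ p k * Matrix.vandermonde α k q)‖ ≤
        C * ((Finset.univ.erase k).sup' hne
          (fun l => ‖γ l‖ / ‖γ k‖)) ^ n := by
  classical
  set V := Matrix.vandermonde α with hV
  -- V is invertible
  have hVdet : V.det ≠ 0 := by
    rw [hV, Matrix.det_vandermonde]
    refine Finset.prod_ne_zero_iff.2 fun a _ => Finset.prod_ne_zero_iff.2 fun b hb => ?_
    have hab : a ≠ b := fun h => absurd (Finset.mem_Ioi.1 hb) (by rw [h]; exact lt_irrefl _)
    exact sub_ne_zero.2 fun h => hab (hdist h.symm)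
  have hinv : V⁻¹ * V = 1 := Matrix.nonsing_inv_mul V (isUnit_iff_ne_zero.2 hVdet)
  -- diagonalization of A
  have hVA : V * A = Matrix.diagonal α * V := by
    ext l j'
    rw [Matrix.mul_apply, Matrix.diagonal_mul]
    by_cases hj : (j' : ℕ) = m - 1
    · have h1 : ∀ s : Fin m, V l s * A s j' = u s.rev * α l ^ (s:ℕ) := by
        intro s; rw [hA]; simp [hj, hV, Matrix.vandermonde_apply, mul_comm]
      rw [Finset.sum_congr rfl fun s _ => h1 s, ← hroot l]
      show α l ^ m = α l * V l j'
      rw [hV]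
      show α l ^ m = α l * α l ^ (j' : ℕ)
      rw [hj, ← pow_succ', Nat.sub_add_cancel hm]
    · have hjm : (j':ℕ) + 1 < m := by have := j'.isLt; omega
      have key : ∀ s : Fin m, V l s * A s j' =
          if s = (⟨(j':ℕ)+1, hjm⟩ : Fin m) then α l ^ ((j':ℕ)+1) else 0 := by
        intro s
        rw [hA]
        simp only [hj, if_false]
        by_cases hs : (s:ℕ) = (j':ℕ)+1
        · have hseq : s = ⟨(j':ℕ)+1, hjm⟩ := Fin.ext hs
          simp [hseq, hV, Matrix.vandermonde_apply]
        · have hsne : s ≠ ⟨(j':ℕ)+1, hjm⟩ := fun h => hs (by rw [h])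
          simp [hs, hsne]
      rw [Finset.sum_congr rfl fun s _ => key s, Finset.sum_ite_eq' Finset.univ,
        if_pos (Finset.mem_univ _)]
      show α l ^ ((j' : ℕ) + 1) = α l * α l ^ (j' : ℕ)
      rw [pow_succ']
  have hVpow : ∀ n : ℕ, V * A ^ n = Matrix.diagonal α ^ n * V := by
    intro n
    induction n with
    | zero => simp
    | succ n ih =>
      rw [pow_succ, ← Matrix.mul_assoc, ih, Matrix.mul_assoc, hVA, ← Matrix.mul_assoc, ← pow_succ]
  -- diagonalization of M
  have hDγ : (∑ n : Fin m, x n • Matrix.diagonal α ^ (n:ℕ)) = Matrix.diagonal γ := by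
    ext a b
    simp only [Matrix.sum_apply, Matrix.smul_apply, Matrix.diagonal_pow,
      Matrix.diagonal_apply, Pi.pow_apply, smul_eq_mul]
    by_cases hab : a = b
    · simp [hab, hγ]
    · simp [hab]
  have hVM : V * M = Matrix.diagonal γ * V := by
    rw [hM, Matrix.mul_sum]
    simp_rw [Matrix.mul_smul, hVpow, ← Matrix.smul_mul]
    rw [← Finset.sum_mul, hDγ]
  have hVMn : ∀ n : ℕ, V * M ^ n = Matrix.diagonal γ ^ n * V := by
    intro n
    induction n with
    | zero => simp
    | succ n ih =>
      rw [pow_succ, ← Matrix.mul_assoc, ih, Matrix.mul_assoc, hVM, ← Matrix.mul_assoc, ← pow_succ]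
  -- entry formula
  have entry : ∀ (n : ℕ) (a b : Fin m),
      (M ^ n) a b = ∑ l : Fin m, V⁻¹ a l * (γ l ^ n * V l b) := by
    intro n a b
    have h1 : M ^ n = V⁻¹ * (Matrix.diagonal γ ^ n * V) := by
      rw [← hVMn n, ← Matrix.mul_assoc, hinv, one_mul]
    rw [h1, Matrix.mul_apply]
    refine Finset.sum_congr rfl fun l _ => ?_
    rw [Matrix.diagonal_pow, Matrix.diagonal_mul, Pi.pow_apply]
  -- abbreviations
  set S := Finset.univ.erase k with hS
  set r : ℝ := S.sup' hne (fun l => ‖γ l‖ / ‖γ k‖) with hr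
  have hγk0 : (0:ℝ) < ‖γ k‖ := norm_pos_iff.mpr hγk
  have hr1 : r < 1 := by
    rw [hr, Finset.sup'_lt_iff]
    exact fun l hl => (div_lt_one hγk0).2 (hdom l (Finset.ne_of_mem_erase hl))
  have hr0 : 0 ≤ r := le_trans (by positivity) (Finset.le_sup' _ hne.choose_spec)
  have hrle : ∀ l ∈ S, ‖γ l / γ k‖ ≤ r := by
    intro l hl
    rw [norm_div]
    exact Finset.le_sup' (fun l => ‖γ l‖ / ‖γ k‖) hl
  set c1 : Fin m → ℂ := fun l => V⁻¹ i l * V l j with hc1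
  set c2 : Fin m → ℂ := fun l => V⁻¹ p l * V l q with hc2
  set num : ℕ → ℂ := fun n => ∑ l : Fin m, c1 l * (γ l / γ k) ^ n with hnum
  set den : ℕ → ℂ := fun n => ∑ l : Fin m, c2 l * (γ l / γ k) ^ n with hdenn
  have hγkn : ∀ n : ℕ, γ k ^ n ≠ 0 := fun n => pow_ne_zero n hγk
  have hMn1 : ∀ n : ℕ, (M ^ n) i j = γ k ^ n * num n := by
    intro n
    rw [entry n i j, hnum, Finset.mul_sum]
    refine Finset.sum_congr rfl fun l _ => ?_
    rw [hc1, div_pow]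
    field_simp
  have hMn2 : ∀ n : ℕ, (M ^ n) p q = γ k ^ n * den n := by
    intro n
    rw [entry n p q, hdenn, Finset.mul_sum]
    refine Finset.sum_congr rfl fun l _ => ?_
    rw [hc2, div_pow]
    field_simp
  -- split off the dominant term
  have hsplit1 : ∀ n : ℕ, num n - c1 k = ∑ l ∈ S, c1 l * (γ l / γ k) ^ n := by
    intro n
    simp only [hnum]
    rw [← Finset.sum_erase_add _ _ (Finset.mem_univ k), div_self hγk, one_pow, mul_one, ← hS]
    ring
  have hsplit2 : ∀ n : ℕ, den n - c2 k = ∑ l ∈ S, c2 l * (γ l / γ k) ^ n := by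
    intro n
    simp only [hdenn]
    rw [← Finset.sum_erase_add _ _ (Finset.mem_univ k), div_self hγk, one_pow, mul_one, ← hS]
    ring
  set C1 : ℝ := ∑ l ∈ S, ‖c1 l‖ with hC1
  set C2 : ℝ := ∑ l ∈ S, ‖c2 l‖ with hC2
  have hbound : ∀ (c : Fin m → ℂ) (n : ℕ),
      ‖∑ l ∈ S, c l * (γ l / γ k) ^ n‖ ≤ (∑ l ∈ S, ‖c l‖) * r ^ n := by
    intro c n
    refine le_trans (norm_sum_le _ _) ?_
    rw [Finset.sum_mul]
    refine Finset.sum_le_sum fun l hl => ?_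
    rw [norm_mul, norm_pow]
    exact mul_le_mul_of_nonneg_left
      (pow_le_pow_left₀ (norm_nonneg _) (hrle l hl) n)
      (norm_nonneg _)
  have hb1 : ∀ n : ℕ, ‖num n - c1 k‖ ≤ C1 * r ^ n := by
    intro n; rw [hsplit1 n]; exact hbound c1 n
  have hb2 : ∀ n : ℕ, ‖den n - c2 k‖ ≤ C2 * r ^ n := by
    intro n; rw [hsplit2 n]; exact hbound c2 n
  have hBk0 : (0:ℝ) < ‖c2 k‖ := norm_pos_iff.mpr hden
  -- eventually the denominator is bounded below
  have htend : Tendsto (fun n : ℕ => C2 * r ^ n) atTop (nhds 0) := by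
    simpa using (tendsto_pow_atTop_nhds_zero_of_lt_one hr0 hr1).const_mul C2
  have hev : ∀ᶠ n : ℕ in atTop, C2 * r ^ n ≤ ‖c2 k‖ / 2 := by
    have := htend.eventually (eventually_le_nhds (by positivity : (0:ℝ) < ‖c2 k‖ / 2))
    exact this
  refine ⟨(C1 * ‖c2 k‖ + ‖c1 k‖ * C2) /
    ((‖c2 k‖ / 2) * ‖c2 k‖), ?_⟩
  filter_upwards [hev] with n hn
  have hdlb : ‖c2 k‖ / 2 ≤ ‖den n‖ := by
    have h1 : ‖c2 k‖ ≤ ‖den n‖ + ‖c2 k - den n‖ := by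
      calc ‖c2 k‖ = ‖den n + (c2 k - den n)‖ := by ring_nf
        _ ≤ _ := norm_add_le _ _
    have h2 : ‖c2 k - den n‖ = ‖den n - c2 k‖ :=
      norm_sub_rev _ _
    have := hb2 n
    linarith
  have hdn0 : den n ≠ 0 := by
    intro h
    rw [h] at hdlb
    simp at hdlb
    linarith
  have hMpq : (M ^ n) p q ≠ 0 := by
    rw [hMn2 n]
    exact mul_ne_zero (hγkn n) hdn0
  have hratio : (M ^ n) i j / (M ^ n) p q = num n / den n := by
    rw [hMn1 n, hMn2 n, mul_div_mul_left _ _ (hγkn n)]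
  rw [hratio]
  have hiden : num n / den n - c1 k / c2 k =
      ((num n - c1 k) * c2 k - c1 k * (den n - c2 k)) / (den n * c2 k) := by
    field_simp [show c2 k ≠ 0 from hden]
    ring
  rw [hiden, norm_div, norm_mul]
  have hnumb : ‖(num n - c1 k) * c2 k - c1 k * (den n - c2 k)‖ ≤
      C1 * ‖c2 k‖ * r ^ n + ‖c1 k‖ * (C2 * r ^ n) := by
    refine le_trans (norm_sub_le _ _) ?_
    rw [show ‖(num n - c1 k) * c2 k‖
          = ‖num n - c1 k‖ * ‖c2 k‖ from norm_mul _ _,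
       show ‖c1 k * (den n - c2 k)‖
          = ‖c1 k‖ * ‖den n - c2 k‖ from norm_mul _ _]
    have e1 : ‖num n - c1 k‖ * ‖c2 k‖ ≤ C1 * r ^ n * ‖c2 k‖ :=
      mul_le_mul_of_nonneg_right (hb1 n) (norm_nonneg _)
    have e2 : ‖c1 k‖ * ‖den n - c2 k‖ ≤
        ‖c1 k‖ * (C2 * r ^ n) :=
      mul_le_mul_of_nonneg_left (hb2 n) (norm_nonneg _)
    calc ‖num n - c1 k‖ * ‖c2 k‖ +
          ‖c1 k‖ * ‖den n - c2 k‖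
        ≤ C1 * r ^ n * ‖c2 k‖ + ‖c1 k‖ * (C2 * r ^ n) :=
          add_le_add e1 e2
      _ = C1 * ‖c2 k‖ * r ^ n + ‖c1 k‖ * (C2 * r ^ n) := by ring
  have hC1nn : 0 ≤ C1 := Finset.sum_nonneg fun l _ => norm_nonneg _
  have hC2nn : 0 ≤ C2 := Finset.sum_nonneg fun l _ => norm_nonneg _
  have hrn : 0 ≤ r ^ n := pow_nonneg hr0 n
  have hnn : 0 ≤ C1 * ‖c2 k‖ * r ^ n + ‖c1 k‖ * (C2 * r ^ n) :=
    add_nonneg (mul_nonneg (mul_nonneg hC1nn (norm_nonneg _)) hrn)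
      (mul_nonneg (norm_nonneg _) (mul_nonneg hC2nn hrn))
  have hdpos : (0:ℝ) < (‖c2 k‖ / 2) * ‖c2 k‖ :=
    mul_pos (half_pos hBk0) hBk0
  have hdb : (‖c2 k‖ / 2) * ‖c2 k‖ ≤
      ‖den n‖ * ‖c2 k‖ :=
    mul_le_mul_of_nonneg_right hdlb (norm_nonneg _)
  calc ‖(num n - c1 k) * c2 k - c1 k * (den n - c2 k)‖ /
        (‖den n‖ * ‖c2 k‖)
      ≤ (C1 * ‖c2 k‖ * r ^ n + ‖c1 k‖ * (C2 * r ^ n)) /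
        ((‖c2 k‖ / 2) * ‖c2 k‖) :=
        div_le_div₀ hnn hnumb hdpos hdb
    _ = (C1 * ‖c2 k‖ + ‖c1 k‖ * C2) /
        ((‖c2 k‖ / 2) * ‖c2 k‖) * r ^ n := by ring
end

section
/- For the Vandermonde matrix V of distinct nonzero α_1,...,α_m, for every index t one has V^{-1}_{m,t} = 1 / ∏_{h ≠ t} (α_t - α_h). -/
open Matrix BigOperators Polynomial

/-- Last row of the inverse Vandermonde matrix: `V⁻¹_{m,t} = 1 / ∏_{h ≠ t} (αₜ - αₕ)`. -/
theorem vandermonde_inv_last_row {K : Type*} [Field K] (m : ℕ) (hm : 1 ≤ m)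
    (α : Fin m → K) (hdist : Function.Injective α) (h0 : ∀ i, α i ≠ 0) (t : Fin m) :
    (Matrix.vandermonde α)⁻¹ ⟨m - 1, by omega⟩ t =
      (∏ h ∈ Finset.univ.erase t, (α t - α h))⁻¹ := by
  -- the Lagrange numerator polynomial
  set p : Fin m → K[X] := fun t => ∏ h ∈ Finset.univ.erase t, (X - C (α h)) with hp
  have hmonic : ∀ t, (p t).Monic := fun t =>
    monic_prod_of_monic _ _ fun h _ => monic_X_sub_C _
  have hdeg : ∀ t, (p t).natDegree = m - 1 := by
    intro t
    rw [hp]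
    simp only
    rw [natDegree_prod _ _ (fun h _ => X_sub_C_ne_zero _)]
    simp [Finset.card_erase_of_mem]
  have heval : ∀ s t, (p t).eval (α s) = ∏ h ∈ Finset.univ.erase t, (α s - α h) := by
    intro s t; simp [hp, eval_prod]
  have hprod_ne : ∀ t : Fin m, (∏ h ∈ Finset.univ.erase t, (α t - α h)) ≠ 0 := by
    intro t
    refine Finset.prod_ne_zero_iff.mpr fun h hh => ?_
    have : α t ≠ α h := fun he => (Finset.mem_erase.mp hh).1 (hdist he).symm
    exact sub_ne_zero.mpr this
  set W : Matrix (Fin m) (Fin m) K := fun j t =>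
    (∏ h ∈ Finset.univ.erase t, (α t - α h))⁻¹ * (p t).coeff j with hW
  have hVW : Matrix.vandermonde α * W = 1 := by
    ext s u
    rw [Matrix.mul_apply]
    have hsum : ∑ j : Fin m, Matrix.vandermonde α s j * W j u =
        (∏ h ∈ Finset.univ.erase u, (α u - α h))⁻¹ * (p u).eval (α s) := by
      rw [eval_eq_sum_range' (n := m) (by rw [hdeg]; omega)]
      rw [Finset.mul_sum, ← Fin.sum_univ_eq_sum_range]
      refine Finset.sum_congr rfl fun j _ => ?_
      simp [Matrix.vandermonde_apply, hW]
      ring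
    rw [hsum, heval]
    by_cases hsu : s = u
    · subst hsu
      rw [inv_mul_cancel₀ (hprod_ne s), Matrix.one_apply_eq]
    · have : ∏ h ∈ Finset.univ.erase u, (α s - α h) = 0 := by
        refine Finset.prod_eq_zero (Finset.mem_erase.mpr ⟨hsu, Finset.mem_univ s⟩) ?_
        simp
      rw [this, mul_zero, Matrix.one_apply_ne hsu]
  have hinv : (Matrix.vandermonde α)⁻¹ = W := Matrix.inv_eq_right_inv hVW
  rw [hinv, hW]
  simp only
  have : (p t).coeff (m - 1) = 1 := by
    have := (hmonic t).leadingCoeff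
    rwa [leadingCoeff, hdeg] at this
  rw [this, mul_one]
end

section
/- With the setting of the regular representation matrix M and distinct nonzero roots α_1,...,α_m, the ratio (V^{-1}_{m,t} V_{t,m-1}) / (V^{-1}_{1,t} V_{t,m}) equals 1/((-1)^{m-1} ∏_{h=1}^m α_h) for every index t; in particular it is independent of t. -/
open Matrix BigOperators Polynomial

section aux

variable {K : Type*} [Field K]

lemma lagrange_basis_eval_sum {m : ℕ} (hm : 2 ≤ m) (α : Fin m → K)
    (t : Fin m) (x : K) :
    (Lagrange.basis Finset.univ α t).eval x
      = ∑ j : Fin m, (Lagrange.basis Finset.univ α t).coeff j * x ^ (j : ℕ) := by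
  have hdeg : (Lagrange.basis Finset.univ α t).natDegree < m := by
    calc (Lagrange.basis Finset.univ α t).natDegree
        ≤ (Finset.univ.erase t).card := by
          unfold Lagrange.basis
          refine (Polynomial.natDegree_prod_le _ _).trans ?_
          refine le_trans (Finset.sum_le_card_nsmul _ _ 1 ?_) (by simp)
          intro j hj
          rcases eq_or_ne (α t) (α j) with h | h
          · simp [h, Lagrange.natDegree_basisDivisor_self]
          · simp [Lagrange.natDegree_basisDivisor_of_ne h]
      _ < m := by
          rw [Finset.card_erase_of_mem (Finset.mem_univ t)]
          simp only [Finset.card_univ, Fintype.card_fin]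
          omega
  rw [Polynomial.eval_eq_sum_range' hdeg, ← Fin.sum_univ_eq_sum_range]

lemma vandermonde_inv_eq {m : ℕ} (hm : 2 ≤ m) (α : Fin m → K)
    (hdist : Function.Injective α) :
    (Matrix.vandermonde α)⁻¹
      = Matrix.of (fun (j t : Fin m) => (Lagrange.basis Finset.univ α t).coeff (j : ℕ)) := by
  apply Matrix.inv_eq_right_inv
  ext s t
  simp only [Matrix.mul_apply, Matrix.vandermonde_apply, Matrix.of_apply]
  have key : ∑ j : Fin m, α s ^ (j : ℕ) * (Lagrange.basis Finset.univ α t).coeff j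
      = (Lagrange.basis Finset.univ α t).eval (α s) := by
    rw [lagrange_basis_eval_sum hm α t (α s)]
    exact Finset.sum_congr rfl fun j _ => mul_comm _ _
  rw [key]
  rcases eq_or_ne s t with rfl | hst
  · rw [Lagrange.eval_basis_self (hdist.injOn) (Finset.mem_univ s)]
    simp
  · rw [Lagrange.eval_basis_of_ne (Ne.symm hst) (Finset.mem_univ s)]
    simp [hst]

end aux

/-- The ratio `(V⁻¹_{m,t} V_{t,m-1}) / (V⁻¹_{1,t} V_{t,m})` equals
`1/((-1)^{m-1} ∏ αₕ)`, independently of `t`. -/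
theorem vandermonde_ratio_const {K : Type*} [Field K] (m : ℕ) (hm : 2 ≤ m)
    (α : Fin m → K) (hdist : Function.Injective α) (h0 : ∀ i, α i ≠ 0) (t : Fin m) :
    (Matrix.vandermonde α)⁻¹ ⟨m - 1, by omega⟩ t * Matrix.vandermonde α t ⟨m - 2, by omega⟩ /
      ((Matrix.vandermonde α)⁻¹ ⟨0, by omega⟩ t * Matrix.vandermonde α t ⟨m - 1, by omega⟩) =
      1 / ((-1) ^ (m - 1) * ∏ h : Fin m, α h) := by
  rw [vandermonde_inv_eq hm α hdist]
  simp only [Matrix.of_apply, Matrix.vandermonde_apply]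
  set B := Lagrange.basis Finset.univ α t with hB
  have hsub : ∀ j ∈ Finset.univ.erase t, α t - α j ≠ 0 := by
    intro j hj
    have : j ≠ t := (Finset.mem_erase.mp hj).1
    exact sub_ne_zero.mpr fun h => this (hdist h.symm)
  -- top coefficient
  have hnd : B.natDegree = m - 1 := by
    rw [hB, Lagrange.natDegree_basis hdist.injOn (Finset.mem_univ t)]
    simp
  have hlead : B.leadingCoeff = ∏ j ∈ Finset.univ.erase t, (α t - α j)⁻¹ := by
    rw [hB]
    unfold Lagrange.basis Lagrange.basisDivisor
    rw [Polynomial.leadingCoeff_prod]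
    apply Finset.prod_congr rfl
    intro j hj
    rw [Polynomial.leadingCoeff_mul, Polynomial.leadingCoeff_C,
      (Polynomial.monic_X_sub_C (α j)).leadingCoeff, mul_one]
  have htop : B.coeff (m - 1) = ∏ j ∈ Finset.univ.erase t, (α t - α j)⁻¹ := by
    rw [← hnd, Polynomial.coeff_natDegree, hlead]
  -- constant coefficient
  have hc0 : B.coeff 0 = ∏ j ∈ Finset.univ.erase t, ((α t - α j)⁻¹ * (-α j)) := by
    rw [Polynomial.coeff_zero_eq_eval_zero, hB]
    unfold Lagrange.basis Lagrange.basisDivisor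
    rw [Polynomial.eval_prod]
    apply Finset.prod_congr rfl
    intro j hj
    simp [sub_eq_neg_add]
  rw [htop, hc0]
  set c := ∏ j ∈ Finset.univ.erase t, (α t - α j)⁻¹ with hc
  have hcne : c ≠ 0 := Finset.prod_ne_zero_iff.mpr fun j hj => inv_ne_zero (hsub j hj)
  rw [Finset.prod_mul_distrib, ← hc]
  have hP : ∏ j ∈ Finset.univ.erase t, (-α j)
      = (-1) ^ (m - 1) * ∏ j ∈ Finset.univ.erase t, α j := by
    simp only [neg_eq_neg_one_mul (α _), Finset.prod_mul_distrib, Finset.prod_const,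
      Finset.card_erase_of_mem (Finset.mem_univ t), Finset.card_univ, Fintype.card_fin]
  have hfull : α t * ∏ j ∈ Finset.univ.erase t, α j = ∏ h : Fin m, α h :=
    Finset.mul_prod_erase Finset.univ α (Finset.mem_univ t)
  have hPne : (∏ j ∈ Finset.univ.erase t, α j) ≠ 0 :=
    Finset.prod_ne_zero_iff.mpr fun j _ => h0 j
  have hpow : α t ^ (m - 1) = α t ^ (m - 2) * α t := by
    rw [← pow_succ]
    congr 1
    omega
  rw [hP, hpow, ← hfull]
  have hne : ((-1 : K) ^ (m - 1)) ≠ 0 := by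
    exact pow_ne_zero _ (neg_ne_zero.mpr one_ne_zero)
  have hpne : α t ^ (m - 2) ≠ 0 := pow_ne_zero _ (h0 t)
  field_simp [hcne, hne, hPne, h0 t, hpne]
end

section
/- For M as in the regular representation (M = Σ x_n A^n with A the companion matrix of a monic polynomial with distinct nonzero roots α_1,...,α_m), the ratio (M^n)_{m,m-1} / (M^n)_{1,m} is the same constant, namely 1/((-1)^{m-1} ∏ α_h), for every n ≥ 1 for which the denominator is nonzero. -/
open Matrix BigOperators Polynomial

lemma const_term_aux (m : ℕ) (hm : 2 ≤ m) (u : Fin m → ℂ) (α : Fin m → ℂ)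
    (hdist : Function.Injective α)
    (hroot : ∀ k : Fin m, α k ^ m = ∑ s : Fin m, u s.rev * α k ^ (s : ℕ)) :
    u (Fin.rev ⟨0, by omega⟩) = (-1) ^ (m - 1) * ∏ h : Fin m, α h := by
  set q : ℂ[X] := ∑ s : Fin m, C (u s.rev) * X ^ (s : ℕ) with hq
  have hqdeg : q.degree < (m : ℕ) := by
    apply lt_of_le_of_lt (Polynomial.degree_sum_le _ _)
    apply Finset.sup_lt_iff (show (⊥ : WithBot ℕ) < (m:ℕ) by exact_mod_cast WithBot.bot_lt_coe m) |>.2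
    intro s _
    exact lt_of_le_of_lt (Polynomial.degree_C_mul_X_pow_le (s:ℕ) (u s.rev))
      (by exact_mod_cast s.isLt)
  set p : ℂ[X] := X ^ m - q with hp
  set r : ℂ[X] := ∏ k : Fin m, (X - C (α k)) with hr
  have hpm : p.Monic := Polynomial.monic_X_pow_sub hqdeg
  have hrm : r.Monic := monic_prod_of_monic _ _ fun k _ => monic_X_sub_C _
  have hpd : p.degree = (m : ℕ) := by
    rw [hp, Polynomial.degree_sub_eq_left_of_degree_lt (by simpa using hqdeg),
      Polynomial.degree_X_pow]
  have hrd : r.degree = (m : ℕ) := by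
    rw [hr, Polynomial.degree_prod]
    simp
  have hzero : p - r = 0 := by
    rcases eq_or_ne (p - r) 0 with h | h
    · exact h
    exact Polynomial.eq_zero_of_natDegree_lt_card_of_eval_eq_zero (p - r) hdist
      (fun k => by
        simp only [Polynomial.eval_sub, hp, hr, Polynomial.eval_pow, Polynomial.eval_X,
          Polynomial.eval_prod, Polynomial.eval_mul, Polynomial.eval_C, hq,
          Polynomial.eval_finset_sum]
        rw [Finset.prod_eq_zero (Finset.mem_univ k) (by simp)]
        simp [hroot k])
      (by
        have : (p - r).degree < (m : ℕ) :=
          hpd ▸ Polynomial.degree_sub_lt (hpd.trans hrd.symm) hpm.ne_zero (by rw [hpm.leadingCoeff, hrm.leadingCoeff])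
        rw [Fintype.card_fin]
        exact Polynomial.natDegree_lt_iff_degree_lt h |>.2 this)
  have := congrArg (Polynomial.eval 0) hzero
  simp only [Polynomial.eval_sub, Polynomial.eval_zero, hp, hr, Polynomial.eval_pow,
    Polynomial.eval_X, Polynomial.eval_prod, Polynomial.eval_sub, Polynomial.eval_C,
    hq, Polynomial.eval_finset_sum, Polynomial.eval_mul] at this
  rw [zero_pow (by omega), Finset.sum_eq_single (⟨0, by omega⟩ : Fin m)
    (fun b _ hb => by
      have : (b : ℕ) ≠ 0 := fun h => hb (Fin.ext h)
      simp [zero_pow this])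
    (by simp)] at this
  simp only [pow_zero, mul_one, zero_sub, neg_eq_zero] at this
  have hprod : ∏ k : Fin m, (-α k) = (-1) ^ m * ∏ h : Fin m, α h := by
    calc ∏ k : Fin m, (-α k) = ∏ k : Fin m, (-1 : ℂ) * α k :=
          Finset.prod_congr rfl fun k _ => (neg_one_mul _).symm
      _ = (∏ _k : Fin m, (-1 : ℂ)) * ∏ h : Fin m, α h := Finset.prod_mul_distrib
      _ = (-1) ^ m * ∏ h : Fin m, α h := by rw [Finset.prod_const, Finset.card_univ, Fintype.card_fin]
  have hm1 : ((-1 : ℂ)) ^ m = (-1) ^ (m - 1) * (-1) := by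
    rw [← pow_succ]
    congr 1
    omega
  rw [hprod] at this
  have : u (Fin.rev ⟨0, by omega⟩) = -((-1) ^ m * ∏ h : Fin m, α h) := by linear_combination -this
  rw [this, hm1]
  ring

/-- The ratio `(Mⁿ)_{m,m-1} / (Mⁿ)_{1,m}` is the constant `1/((-1)^{m-1} ∏ αₕ)`
for every `n ≥ 1` for which the denominator is nonzero. -/
theorem regular_rep_constant_ratio (m : ℕ) (hm : 2 ≤ m)
    (u : Fin m → ℂ) (α : Fin m → ℂ) (hdist : Function.Injective α) (h0 : ∀ i, α i ≠ 0)
    (hroot : ∀ k : Fin m, α k ^ m = ∑ s : Fin m, u s.rev * α k ^ (s : ℕ))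
    (A : Matrix (Fin m) (Fin m) ℂ)
    (hA : ∀ i j : Fin m, A i j =
      if (j : ℕ) = m - 1 then u i.rev
      else if (i : ℕ) = (j : ℕ) + 1 then 1 else 0)
    (x : Fin m → ℂ) (M : Matrix (Fin m) (Fin m) ℂ)
    (hM : M = ∑ n : Fin m, x n • A ^ (n : ℕ))
    (n : ℕ) (hn : 1 ≤ n)
    (hden : (M ^ n) ⟨0, by omega⟩ ⟨m - 1, by omega⟩ ≠ 0) :
    (M ^ n) ⟨m - 1, by omega⟩ ⟨m - 2, by omega⟩ /
      (M ^ n) ⟨0, by omega⟩ ⟨m - 1, by omega⟩ =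
      1 / ((-1) ^ (m - 1) * ∏ h : Fin m, α h) := by
  have h0m : 0 < m := by omega
  set i0 : Fin m := ⟨0, h0m⟩ with hi0
  set im1 : Fin m := ⟨m - 1, by omega⟩ with him1
  set im2 : Fin m := ⟨m - 2, by omega⟩ with him2
  set c : ℂ := u i0.rev with hcdef
  have hcomm : Commute A M := by
    rw [hM]
    exact Commute.sum_right _ _ _ fun i _ => ((Commute.refl A).pow_right _).smul_right _
  have hcommn : Commute A (M ^ n) := hcomm.pow_right n
  -- entry (i0, im2) of A * M^n
  have him1v : (im1 : ℕ) = m - 1 := rfl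
  have him2v : (im2 : ℕ) = m - 2 := rfl
  have hi0v : (i0 : ℕ) = 0 := rfl
  have h1 : (A * M ^ n) i0 im2 = c * (M ^ n) im1 im2 := by
    rw [Matrix.mul_apply, Finset.sum_eq_single im1]
    · rw [hA, if_pos him1v]
    · intro b _ hb
      rw [hA]
      have hb1 : (b : ℕ) ≠ m - 1 := fun h => hb (Fin.ext (h.trans him1v.symm))
      have hb2 : (i0 : ℕ) ≠ (b : ℕ) + 1 := by rw [hi0v]; omega
      rw [if_neg hb1, if_neg hb2, zero_mul]
    · intro h
      exact absurd (Finset.mem_univ im1) h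
  -- entry (i0, im2) of M^n * A
  have hne : (im2 : ℕ) ≠ m - 1 := by rw [him2v]; omega
  have h2 : (M ^ n * A) i0 im2 = (M ^ n) i0 im1 := by
    rw [Matrix.mul_apply, Finset.sum_eq_single im1]
    · have h' : (im1 : ℕ) = (im2 : ℕ) + 1 := by rw [him1v, him2v]; omega
      rw [hA, if_neg hne, if_pos h', mul_one]
    · intro b _ hb
      have hb2 : (b : ℕ) ≠ (im2 : ℕ) + 1 := by
        intro h
        exact hb (Fin.ext (by rw [h, him2v, him1v]; omega))
      rw [hA, if_neg hne, if_neg hb2, mul_zero]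
    · intro h
      exact absurd (Finset.mem_univ im1) h
  have hkey : (M ^ n) i0 im1 = c * (M ^ n) im1 im2 := by
    rw [← h2, ← hcommn.eq, h1]
  have hc : c = (-1) ^ (m - 1) * ∏ h : Fin m, α h :=
    const_term_aux m hm u α hdist hroot
  have hden' : (M ^ n) i0 im1 ≠ 0 := hden
  have hN : (M ^ n) im1 im2 ≠ 0 := by
    intro h
    exact hden' (by rw [hkey, h, mul_zero])
  show (M ^ n) im1 im2 / (M ^ n) i0 im1 = 1 / ((-1) ^ (m - 1) * ∏ h : Fin m, α h)
  rw [hkey, ← hc, mul_comm c, ← div_div, div_self hN]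
end

section
/- Let r > 1 be a real number that is not a perfect cube of a rational, let A be the Khovanskii matrix with rows (x, r, r), (1, x, r), (1, 1, x) for a rational x ≥ 0. If |x + r^{1/3} + r^{2/3}| > |x + ω r^{1/3} + ω² r^{2/3}| for both primitive cube roots of unity ω (which holds e.g. for x ≥ 0, r > 1), then lim_{n→∞} (A^n)_{2,1} / (A^n)_{3,1} = r^{1/3} and lim_{n→∞} (A^n)_{1,1} / (A^n)_{3,1} = r^{2/3}. -/
open Matrix Filter Real

private lemma khov_eig (x r s : ℂ) (hs : s ≠ 0) (hs3 : s ^ 3 = r) :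
    (x * 1 + r * (1/s) + r * (1/s^2) = (x+s+s^2) * 1) ∧
    (1 * 1 + x * (1/s) + r * (1/s^2) = (x+s+s^2) * (1/s)) ∧
    (1 * 1 + 1 * (1/s) + x * (1/s^2) = (x+s+s^2) * (1/s^2)) := by
  refine ⟨?_, ?_, ?_⟩
  · field_simp
    linear_combination (1 + s) * hs3.symm
  · field_simp
    linear_combination hs3.symm
  · field_simp
    ring_nf

set_option maxHeartbeats 1000000 in
/-- Khovanskii matrix approximations of cube roots: under the dominance condition,
ratios of entries of `Aⁿ` converge to `r^{1/3}` and `r^{2/3}`. -/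
theorem khovanskii_tendsto (r : ℝ) (hr : 1 < r) (hncube : ¬ ∃ s : ℚ, (s : ℝ) ^ 3 = r)
    (x : ℚ) (hx : 0 ≤ x)
    (A : Matrix (Fin 3) (Fin 3) ℝ)
    (hA : A = !![(x : ℝ), r, r; 1, (x : ℝ), r; 1, 1, (x : ℝ)])
    (hdom : ∀ ω : ℂ, ω ^ 3 = 1 → ω ≠ 1 →
      ‖(x : ℂ) + ω * (r ^ ((1 : ℝ) / 3) : ℝ) +
          ω ^ 2 * (r ^ ((2 : ℝ) / 3) : ℝ)‖ <
        (x : ℝ) + r ^ ((1 : ℝ) / 3) + r ^ ((2 : ℝ) / 3)) :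
    Tendsto (fun n : ℕ => (A ^ n) 1 0 / (A ^ n) 2 0) atTop (nhds (r ^ ((1 : ℝ) / 3))) ∧
    Tendsto (fun n : ℕ => (A ^ n) 0 0 / (A ^ n) 2 0) atTop (nhds (r ^ ((2 : ℝ) / 3))) := by
  have hr0 : (0:ℝ) < r := lt_trans one_pos hr
  set t : ℝ := r ^ ((1:ℝ)/3) with htdef
  have ht1 : 1 < t := by
    rw [htdef, Real.one_lt_rpow_iff_of_pos hr0]
    left; exact ⟨hr, by norm_num⟩
  have ht0 : (0:ℝ) < t := lt_trans one_pos ht1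
  have ht3 : t ^ 3 = r := by
    rw [htdef, ← Real.rpow_natCast (r ^ ((1:ℝ)/3)) 3, ← Real.rpow_mul hr0.le]
    norm_num
  have h23 : r ^ ((2:ℝ)/3) = t ^ 2 := by
    rw [htdef, ← Real.rpow_natCast (r ^ ((1:ℝ)/3)) 2, ← Real.rpow_mul hr0.le]
    norm_num
  rw [h23] at hdom ⊢
  -- cube root of unity
  set ω : ℂ := (-1 + Real.sqrt 3 * Complex.I) / 2 with hωdef
  have hc : ((Real.sqrt 3 : ℝ):ℂ)^2 = 3 := by
    norm_cast
    rw [Real.sq_sqrt]; norm_num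
  have hω : ω^2 + ω + 1 = 0 := by
    rw [hωdef]
    linear_combination (Complex.I^2/4) * hc + (3/4) * Complex.I_sq
  have hω3 : ω^3 = 1 := by linear_combination (ω - 1) * hω
  have hωne1 : ω ≠ 1 := by
    intro h
    have := congrArg Complex.im h
    simp [hωdef] at this
  have hω2ne1 : ω^2 ≠ 1 := by
    intro h
    apply hωne1
    have h4 : ω^4 = 1 := by rw [show (4:ℕ) = 2*2 by rfl, pow_mul, h]; norm_num
    calc ω = ω * ω^3 := by rw [hω3]; ring
      _ = ω^4 := by ring
      _ = 1 := h4
  have hω23 : (ω^2)^3 = 1 := by rw [← pow_mul, show 2*3 = 3*2 by rfl, pow_mul, hω3]; norm_num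
  have hω0 : ω ≠ 0 := by
    intro h; rw [h] at hω3; norm_num at hω3
  -- eigenvalues and eigen-data
  set s0 : ℂ := ((t:ℝ) : ℂ) with hs0def
  set s1 : ℂ := ω * t with hs1def
  set s2 : ℂ := ω^2 * t with hs2def
  have ht0c : (t : ℂ) ≠ 0 := by exact_mod_cast ht0.ne'
  have hs0ne : s0 ≠ 0 := ht0c
  have hs1ne : s1 ≠ 0 := mul_ne_zero hω0 ht0c
  have hs2ne : s2 ≠ 0 := mul_ne_zero (pow_ne_zero 2 hω0) ht0c
  have ht3c : (t:ℂ)^3 = (r:ℂ) := by exact_mod_cast ht3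
  have hs03 : s0^3 = (r:ℂ) := ht3c
  have hs13 : s1^3 = (r:ℂ) := by rw [hs1def, mul_pow, hω3, one_mul, ht3c]
  have hs23 : s2^3 = (r:ℂ) := by rw [hs2def, mul_pow, hω23, one_mul, ht3c]
  set lam0 : ℂ := (x:ℂ) + s0 + s0^2 with hlam0def
  set lam1 : ℂ := (x:ℂ) + s1 + s1^2 with hlam1def
  set lam2 : ℂ := (x:ℂ) + s2 + s2^2 with hlam2def
  set Λ : ℝ := (x:ℝ) + t + t^2 with hΛdef
  have hΛpos : 0 < Λ := by
    have : (0:ℝ) ≤ (x:ℝ) := by exact_mod_cast hx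
    nlinarith
  have hΛc : ((Λ:ℝ):ℂ) = lam0 := by
    rw [hΛdef, hlam0def, hs0def]; push_cast; ring
  have hlam0ne : lam0 ≠ 0 := by
    rw [← hΛc]; exact_mod_cast hΛpos.ne'
  -- dominance
  have hd1 : ‖lam1‖ < Λ := by
    have h := hdom ω hω3 hωne1
    have harg : (x:ℂ) + ω * s0 + ω^2 * ((t^2 : ℝ):ℂ) = lam1 := by
      rw [hlam1def, hs1def, hs0def]; push_cast; ring
    rwa [harg] at h
  have h4 : (ω^2)^2 = ω := by
    calc (ω^2)^2 = ω * ω^3 := by ring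
      _ = ω := by rw [hω3]; ring
  have hd2 : ‖lam2‖ < Λ := by
    have h := hdom (ω^2) hω23 hω2ne1
    rw [h4] at h
    have harg : (x:ℂ) + ω^2 * s0 + ω * ((t^2 : ℝ):ℂ) = lam2 := by
      rw [hlam2def, hs2def, hs0def]; push_cast
      linear_combination (-((t:ℂ)^2 * ω)) * hω3
    rwa [harg] at h
  -- eigen identities
  obtain ⟨e00, e01, e02⟩ := khov_eig (x:ℂ) (r:ℂ) s0 hs0ne hs03
  obtain ⟨e10, e11, e12⟩ := khov_eig (x:ℂ) (r:ℂ) s1 hs1ne hs13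
  obtain ⟨e20, e21, e22⟩ := khov_eig (x:ℂ) (r:ℂ) s2 hs2ne hs23
  -- key formula
  have key : ∀ n : ℕ,
      (((A ^ n) 0 0 : ℝ) : ℂ) = (lam0^n * 1 + lam1^n * 1 + lam2^n * 1)/3 ∧
      (((A ^ n) 1 0 : ℝ) : ℂ) = (lam0^n * (1/s0) + lam1^n * (1/s1) + lam2^n * (1/s2))/3 ∧
      (((A ^ n) 2 0 : ℝ) : ℂ) = (lam0^n * (1/s0^2) + lam1^n * (1/s1^2) + lam2^n * (1/s2^2))/3 := by
    intro n
    induction n with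
    | zero =>
      have hsum1 : 1/s0 + 1/s1 + 1/s2 = 0 := by
        rw [hs0def, hs1def, hs2def]
        clear_value ω
        field_simp
        linear_combination hω
      have hsum2 : 1/s0^2 + 1/s1^2 + 1/s2^2 = 0 := by
        rw [hs0def, hs1def, hs2def]
        clear_value ω
        field_simp
        linear_combination ω * hω3 + hω
      refine ⟨?_, ?_, ?_⟩ <;> simp only [pow_zero, Matrix.one_apply, one_mul]
      · norm_num
      · rw [if_neg (by decide : ¬(1:Fin 3) = 0), hsum1]
        norm_num
      · rw [if_neg (by decide : ¬(2:Fin 3) = 0), hsum2]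
        norm_num
    | succ n ih =>
      obtain ⟨h0, h1, h2⟩ := ih
      have hmul0 : (A ^ (n+1)) 0 0 = (x:ℝ) * (A ^ n) 0 0 + r * (A ^ n) 1 0 + r * (A ^ n) 2 0 := by
        rw [pow_succ', Matrix.mul_apply, Fin.sum_univ_three, hA]
        simp
      have hmul1 : (A ^ (n+1)) 1 0 = 1 * (A ^ n) 0 0 + (x:ℝ) * (A ^ n) 1 0 + r * (A ^ n) 2 0 := by
        rw [pow_succ', Matrix.mul_apply, Fin.sum_univ_three, hA]
        simp
      have hmul2 : (A ^ (n+1)) 2 0 = 1 * (A ^ n) 0 0 + 1 * (A ^ n) 1 0 + (x:ℝ) * (A ^ n) 2 0 := by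
        rw [pow_succ', Matrix.mul_apply, Fin.sum_univ_three, hA]
        simp
      refine ⟨?_, ?_, ?_⟩
      · rw [hmul0]
        push_cast
        rw [h0, h1, h2]
        linear_combination (lam0^n/3) * e00 + (lam1^n/3) * e10 + (lam2^n/3) * e20
      · rw [hmul1]
        push_cast
        rw [h0, h1, h2]
        linear_combination (lam0^n/3) * e01 + (lam1^n/3) * e11 + (lam2^n/3) * e21
      · rw [hmul2]
        push_cast
        rw [h0, h1, h2]
        linear_combination (lam0^n/3) * e02 + (lam1^n/3) * e12 + (lam2^n/3) * e22
  -- entrywise limits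
  have entlim : ∀ (i : Fin 3) (c0 c1 c2 : ℂ),
      (∀ n : ℕ, (((A ^ n) i 0 : ℝ) : ℂ) = (lam0^n * c0 + lam1^n * c1 + lam2^n * c2)/3) →
      Tendsto (fun n : ℕ => (A ^ n) i 0 / Λ ^ n) atTop (nhds ((c0/3).re)) := by
    intro i c0 c1 c2 hform
    have hnl0 : ‖lam0‖ = Λ := by
      rw [← hΛc, Complex.norm_real, Real.norm_of_nonneg hΛpos.le]
    have hn1 : ‖lam1 / lam0‖ < 1 := by
      rw [norm_div, hnl0, div_lt_one hΛpos]
      exact hd1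
    have hn2 : ‖lam2 / lam0‖ < 1 := by
      rw [norm_div, hnl0, div_lt_one hΛpos]
      exact hd2
    have t1 := tendsto_pow_atTop_nhds_zero_of_norm_lt_one hn1
    have t2 := tendsto_pow_atTop_nhds_zero_of_norm_lt_one hn2
    have hz : ∀ n : ℕ, (((A ^ n) i 0 / Λ ^ n : ℝ) : ℂ)
        = c0/3 + (lam1/lam0)^n * (c1/3) + (lam2/lam0)^n * (c2/3) := by
      intro n
      rw [Complex.ofReal_div, Complex.ofReal_pow, hΛc, hform n, div_pow, div_pow]
      field_simp [pow_ne_zero n hlam0ne]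
    have tc0 : Tendsto (fun n : ℕ => c0/3 + (lam1/lam0)^n * (c1/3) + (lam2/lam0)^n * (c2/3))
        atTop (nhds (c0/3 + 0 * (c1/3) + 0 * (c2/3))) :=
      (tendsto_const_nhds.add (t1.mul tendsto_const_nhds)).add (t2.mul tendsto_const_nhds)
    simp only [zero_mul, add_zero] at tc0
    have tc : Tendsto (fun n : ℕ => (((A ^ n) i 0 / Λ ^ n : ℝ) : ℂ)) atTop (nhds (c0/3)) :=
      tc0.congr fun n => (hz n).symm
    have hre := (Complex.continuous_re.tendsto _).comp tc
    exact hre.congr fun n => Complex.ofReal_re _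
  have ha := entlim 0 1 1 1 (fun n => (key n).1)
  have hb := entlim 1 (1/s0) (1/s1) (1/s2) (fun n => (key n).2.1)
  have hc2 := entlim 2 (1/s0^2) (1/s1^2) (1/s2^2) (fun n => (key n).2.2)
  have hre0 : ((1:ℂ)/3).re = ((1:ℝ)/3) := by norm_num
  have hreb : ((1/s0)/3 : ℂ).re = 1/(3*t) := by
    rw [hs0def, show ((1/((t:ℝ):ℂ))/3 : ℂ) = (((1/(3*t) : ℝ)) : ℂ) by push_cast; ring,
      Complex.ofReal_re]
  have hrec : ((1/s0^2)/3 : ℂ).re = 1/(3*t^2) := by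
    rw [hs0def, show ((1/((t:ℝ):ℂ)^2)/3 : ℂ) = (((1/(3*t^2) : ℝ)) : ℂ) by push_cast; ring,
      Complex.ofReal_re]
  rw [hre0] at ha
  rw [hreb] at hb
  rw [hrec] at hc2
  have hden : (1/(3*t^2) : ℝ) ≠ 0 := by positivity
  have hΛne : ∀ n : ℕ, (Λ:ℝ)^n ≠ 0 := fun n => pow_ne_zero n hΛpos.ne'
  constructor
  · have H := hb.div hc2 hden
    have hfun : (fun n : ℕ => (A^n) 1 0/(A^n) 2 0)
        = fun n : ℕ => ((A^n) 1 0/Λ^n)/((A^n) 2 0/Λ^n) := by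
      funext n
      rw [div_div_div_cancel_right₀ (hΛne n)]
    have hval : (1/(3*t))/(1/(3*t^2)) = t := by
      field_simp
    rw [hfun]
    convert H using 2
    exacts [rfl, hval.symm]
  · have H := ha.div hc2 hden
    have hfun : (fun n : ℕ => (A^n) 0 0/(A^n) 2 0)
        = fun n : ℕ => ((A^n) 0 0/Λ^n)/((A^n) 2 0/Λ^n) := by
      funext n
      rw [div_div_div_cancel_right₀ (hΛne n)]
    have hval : ((1:ℝ)/3)/(1/(3*t^2)) = t^2 := by
      field_simp
    rw [hfun]
    convert H using 2
    exacts [rfl, hval.symm]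
end

section
/- Let r > 0 be real, x > 0 rational, and B the 3×3 matrix with rows (x, r, 0), (0, x, r), (1, 0, x). Then lim_{n→∞} (B^n)_{2,1}/(B^n)_{3,1} = r^{1/3} and lim_{n→∞} (B^n)_{1,1}/(B^n)_{3,1} = r^{2/3}. -/
open Matrix Filter Real

set_option maxHeartbeats 1000000 in
/-- For the matrix `B` with rows `(x,r,0),(0,x,r),(1,0,x)`, `r > 0`, `x > 0`,
ratios of entries of `Bⁿ` converge to `r^{1/3}` and `r^{2/3}`. -/
theorem b_matrix_tendsto (r : ℝ) (hr : 0 < r) (x : ℚ) (hx : 0 < x)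
    (B : Matrix (Fin 3) (Fin 3) ℝ)
    (hB : B = !![(x : ℝ), r, 0; 0, (x : ℝ), r; 1, 0, (x : ℝ)]) :
    Tendsto (fun n : ℕ => (B ^ n) 1 0 / (B ^ n) 2 0) atTop (nhds (r ^ ((1 : ℝ) / 3))) ∧
    Tendsto (fun n : ℕ => (B ^ n) 0 0 / (B ^ n) 2 0) atTop (nhds (r ^ ((2 : ℝ) / 3))) := by
  set y : ℝ := r ^ ((1:ℝ)/3) with hy_def
  clear_value y
  have hy : 0 < y := by rw [hy_def]; exact Real.rpow_pos_of_pos hr _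
  have hy3 : y ^ 3 = r := by
    rw [hy_def, ← Real.rpow_natCast (r ^ ((1:ℝ)/3)) 3, ← Real.rpow_mul hr.le]
    norm_num
  have hy2 : r ^ ((2:ℝ)/3) = y ^ 2 := by
    rw [hy_def, ← Real.rpow_natCast (r ^ ((1:ℝ)/3)) 2, ← Real.rpow_mul hr.le]
    norm_num
  set X : ℝ := (x : ℝ) with hX_def
  clear_value X
  have hX : 0 < X := by rw [hX_def]; exact_mod_cast hx
  set a : ℕ → ℝ := fun n => (B ^ n) 0 0 with ha_def
  set b : ℕ → ℝ := fun n => (B ^ n) 1 0 with hb_def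
  set g : ℕ → ℝ := fun n => (B ^ n) 2 0 with hg_def
  clear_value a b g
  have step : ∀ n : ℕ, a (n+1) = X * a n + r * b n ∧ b (n+1) = X * b n + r * g n ∧
      g (n+1) = a n + X * g n := by
    intro n
    have h1 : B ^ (n+1) = B * B ^ n := pow_succ' B n
    simp only [ha_def, hb_def, hg_def]
    refine ⟨?_, ?_, ?_⟩ <;>
    · rw [h1, hB, Matrix.mul_apply, Fin.sum_univ_three]
      simp
  have h0 : a 0 = 1 ∧ b 0 = 0 ∧ g 0 = 0 := by
    refine ⟨?_, ?_, ?_⟩ <;> simp [ha_def, hb_def, hg_def, Matrix.one_apply]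
  set l : ℝ := X + y^2 with hl_def
  clear_value l
  have hl : 0 < l := by rw [hl_def]; positivity
  have hLn : ∀ n : ℕ, a n + y * b n + y^2 * g n = l ^ n := by
    intro n
    induction n with
    | zero => simp [h0.1, h0.2.1, h0.2.2]
    | succ n ih =>
      obtain ⟨e1, e2, e3⟩ := step n
      rw [e1, e2, e3, pow_succ]
      linear_combination l * ih - (b n + y * g n) * hy3 - (a n + y * b n + y^2 * g n) * hl_def
  set s : ℝ := Real.sqrt 3 with hs_def
  clear_value s
  have hs2 : s ^ 2 = 3 := by rw [hs_def]; exact Real.sq_sqrt (by norm_num)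
  have hs0 : 0 < s := by rw [hs_def]; exact Real.sqrt_pos.mpr (by norm_num)
  have hs1 : 1 ≤ s := by nlinarith
  set w : ℂ := ⟨-1/2, s/2⟩ with hw_def
  clear_value w
  have hw : w^2 + w + 1 = 0 := by
    apply Complex.ext <;>
    simp [hw_def, pow_two, Complex.mul_re, Complex.mul_im] <;>
    nlinarith
  have hwabs : ‖w‖ = 1 := by
    rw [Complex.norm_def, Complex.normSq_apply]
    have h4 : w.re * w.re + w.im * w.im = 1 := by
      simp only [hw_def]
      nlinarith
    rw [h4, Real.sqrt_one]
  set μ : ℂ := (X:ℂ) + (y:ℂ)^2 * w with hmu_def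
  clear_value μ
  have hZ : ∀ n : ℕ, (y:ℂ) * ((b n : ℂ) - (y:ℂ) * (g n : ℂ))
      + w * ((a n : ℂ) - (y:ℂ)^2 * (g n : ℂ)) = w * μ ^ n := by
    intro n
    induction n with
    | zero => rw [h0.1, h0.2.1, h0.2.2]; push_cast; ring
    | succ n ih =>
      obtain ⟨e1, e2, e3⟩ := step n
      rw [e1, e2, e3, pow_succ]
      push_cast
      have hy3' : ((y:ℝ):ℂ)^3 = ((r:ℝ):ℂ) := by exact_mod_cast congrArg (Complex.ofReal) hy3
      linear_combination ((y:ℂ)^4 * ((g n : ℝ):ℂ) - (y:ℂ)^2 * ((a n : ℝ):ℂ)) * hw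
        - ((y:ℂ) * ((g n:ℝ):ℂ) + w * ((b n:ℝ):ℂ)) * hy3' + μ * ih
        - ((y:ℂ) * (((b n:ℝ):ℂ) - (y:ℂ) * ((g n:ℝ):ℂ))
           + w * (((a n:ℝ):ℂ) - (y:ℂ)^2 * ((g n:ℝ):ℂ))) * hmu_def
  set m : ℝ := ‖μ‖ with hm_def
  clear_value m
  have hm0 : 0 ≤ m := by rw [hm_def]; exact norm_nonneg μ
  -- recast
  have hz : ∀ n : ℕ, ((y * (b n - y * g n) : ℝ) : ℂ) + w * ((a n - y^2 * g n : ℝ) : ℂ)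
      = w * μ ^ n := by
    intro n; rw [← hZ n]; push_cast; ring
  have hzabs : ∀ n : ℕ, ‖w * μ ^ n‖ = m ^ n := by
    intro n; rw [norm_mul, norm_pow, hwabs, one_mul, ← hm_def]
  -- bound on f n = a n - y² g n
  have hf : ∀ n : ℕ, |a n - y^2 * g n| ≤ 2 * m ^ n := by
    intro n
    have h1 : (((y * (b n - y * g n) : ℝ) : ℂ) + w * ((a n - y^2 * g n : ℝ) : ℂ)).im
        = (s/2) * (a n - y^2 * g n) := by
      simp only [Complex.add_im, Complex.mul_im, Complex.ofReal_im, Complex.ofReal_re, hw_def]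
      ring
    have h2 : |(w * μ ^ n).im| ≤ m ^ n := by
      rw [← hzabs n]; exact Complex.abs_im_le_norm _
    rw [← hz n, h1, abs_mul, abs_of_pos (by positivity : (0:ℝ) < s/2)] at h2
    nlinarith [abs_nonneg (a n - y^2 * g n)]
  -- bound on y * |e n|, e n = b n - y g n
  have he : ∀ n : ℕ, y * |b n - y * g n| ≤ 3 * m ^ n := by
    intro n
    have h1 : ((y * (b n - y * g n) : ℝ) : ℂ)
        = w * μ ^ n - w * ((a n - y^2 * g n : ℝ) : ℂ) := by
      rw [← hz n]; ring
    have h2 : |y * (b n - y * g n)| ≤ m ^ n + 2 * m ^ n := by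
      calc |y * (b n - y * g n)| = ‖((y * (b n - y * g n) : ℝ) : ℂ)‖ := by
            rw [Complex.norm_real, Real.norm_eq_abs]
        _ ≤ ‖w * μ ^ n‖ + ‖w * ((a n - y^2 * g n : ℝ) : ℂ)‖ := by
            rw [h1]; exact norm_sub_le _ _
        _ ≤ m ^ n + 2 * m ^ n := by
            rw [hzabs n, norm_mul, hwabs, one_mul, Complex.norm_real, Real.norm_eq_abs]
            have := hf n; linarith
    rw [abs_mul, abs_of_pos hy] at h2
    linarith
  -- m < l
  have hml : m < l := by
    have hre : μ.re = X - y^2/2 := by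
      rw [hmu_def]
      simp only [Complex.add_re, Complex.mul_re, Complex.ofReal_re, Complex.ofReal_im,
        ← Complex.ofReal_pow, hw_def]
      ring
    have him : μ.im = y^2 * s / 2 := by
      rw [hmu_def]
      simp only [Complex.add_im, Complex.mul_im, Complex.ofReal_re, Complex.ofReal_im,
        ← Complex.ofReal_pow, hw_def]
      ring
    have h1 : m^2 = X^2 - X*y^2 + y^4 := by
      rw [hm_def, Complex.sq_norm, Complex.normSq_apply, hre, him]
      linear_combination (y^4/4) * hs2
    have h2 : m^2 < l^2 := by
      rw [h1, hl_def]; linarith [mul_pos hX (pow_pos hy 2)]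
    exact lt_of_pow_lt_pow_left₀ 2 hl.le h2
  set q : ℝ := m / l with hq_def
  clear_value q
  have hq0 : 0 ≤ q := by rw [hq_def]; exact div_nonneg hm0 hl.le
  have hq1 : q < 1 := by rw [hq_def]; exact (div_lt_one hl).mpr hml
  have hmq : ∀ n : ℕ, m ^ n = q ^ n * l ^ n := by
    intro n
    rw [hq_def, div_pow, div_mul_cancel₀]
    exact pow_ne_zero n hl.ne'
  have htq : Tendsto (fun n : ℕ => q ^ n) atTop (nhds 0) :=
    tendsto_pow_atTop_nhds_zero_of_lt_one hq0 hq1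
  have hev : ∀ᶠ n : ℕ in atTop, q ^ n < 1/10 :=
    htq.eventually (gt_mem_nhds (by norm_num : (0:ℝ) < 1/10))
  have hglb : ∀ᶠ n : ℕ in atTop, l ^ n ≤ 6 * y^2 * g n := by
    filter_upwards [hev] with n hn
    have h8 : m ^ n ≤ (1/10) * l ^ n := by
      rw [hmq n]
      exact mul_le_mul_of_nonneg_right hn.le (pow_nonneg hl.le n)
    have h9 : y * (b n - y * g n) ≤ y * |b n - y * g n| :=
      mul_le_mul_of_nonneg_left (le_abs_self _) hy.le
    have h10 := le_abs_self (a n - y^2 * g n)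
    have := hLn n
    nlinarith [hf n, he n]
  have hgpos : ∀ᶠ n : ℕ in atTop, 0 < g n := by
    filter_upwards [hglb] with n hn
    nlinarith [pow_pos hl n, pow_pos hy 2]
  -- e/g → 0
  have hE0 : Tendsto (fun n : ℕ => (b n - y * g n) / g n) atTop (nhds 0) := by
    apply squeeze_zero_norm' (a := fun n : ℕ => (18*y) * q ^ n)
    · filter_upwards [hglb, hgpos] with n h1 h2
      rw [Real.norm_eq_abs, abs_div, abs_of_pos h2, div_le_iff₀ h2]
      have h3 : q ^ n * l ^ n ≤ q ^ n * (6 * y^2 * g n) :=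
        mul_le_mul_of_nonneg_left h1 (pow_nonneg hq0 n)
      have h4 := he n
      rw [hmq n] at h4
      nlinarith
    · have := htq.const_mul (18*y)
      simpa using this
  have hF0 : Tendsto (fun n : ℕ => (a n - y^2 * g n) / g n) atTop (nhds 0) := by
    apply squeeze_zero_norm' (a := fun n : ℕ => (12*y^2) * q ^ n)
    · filter_upwards [hglb, hgpos] with n h1 h2
      rw [Real.norm_eq_abs, abs_div, abs_of_pos h2, div_le_iff₀ h2]
      have h3 : q ^ n * l ^ n ≤ q ^ n * (6 * y^2 * g n) :=
        mul_le_mul_of_nonneg_left h1 (pow_nonneg hq0 n)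
      have h4 := hf n
      rw [hmq n] at h4
      nlinarith
    · have := htq.const_mul (12*y^2)
      simpa using this
  have hT1 : Tendsto (fun n : ℕ => b n / g n) atTop (nhds y) := by
    have h1 : Tendsto (fun n : ℕ => y + (b n - y * g n) / g n) atTop (nhds y) := by
      have := Tendsto.add (tendsto_const_nhds : Tendsto (fun _ : ℕ => y) atTop (nhds y)) hE0
      rwa [add_zero] at this
    apply h1.congr'
    filter_upwards [hgpos] with n hn
    field_simp
    ring
  have hT2 : Tendsto (fun n : ℕ => a n / g n) atTop (nhds (y^2)) := by
    have h1 : Tendsto (fun n : ℕ => y^2 + (a n - y^2 * g n) / g n) atTop (nhds (y^2)) := by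
      have := Tendsto.add (tendsto_const_nhds : Tendsto (fun _ : ℕ => y^2) atTop (nhds (y^2))) hF0
      rwa [add_zero] at this
    apply h1.congr'
    filter_upwards [hgpos] with n hn
    field_simp
    ring
  rw [hy2]
  constructor
  · exact hT1.congr (fun n => by simp only [hb_def, hg_def])
  · exact hT2.congr (fun n => by simp only [ha_def, hg_def])
end
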